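/- arXiv:2403.04630 — 2 statements merged into one kernel-verified Lean document; each statement's English description precedes it below -/
import Mathlib

section
/- Let ε > 0, c ∈ ℕ with c ≥ 1, τ ∈ ℝ, T ∈ ℕ, and q_1, ..., q_T ∈ ℝ. Let Z, Z_1, ..., Z_T be independent real random variables, where Z has the Laplace distribution with scale 2/ε and each Z_t has the Laplace distribution with scale 4c/ε. Fix t' ∈ [T]. If x ≤ 0 and q_t ≤ x + τ for all t ≤ t', then P(for all t ≤ t', q_t + Z_t < τ + Z) ≥ 1 − T·exp(x·ε/(8c)). (When this event occurs, the sparse vector mechanism with threshold τ, privacy parameter ε, and cutoff c outputs ⊤ at every time step t ≤ t'.) -/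
open MeasureTheory

/-- The Laplace distribution with scale `b`: the measure on `ℝ` with density
`(1/(2b))·e^{−|z|/b}` with respect to Lebesgue measure. -/
noncomputable def laplace (b : ℝ) : Measure ℝ :=
  (volume : Measure ℝ).withDensity
    (fun z => ENNReal.ofReal ((1 / (2 * b)) * Real.exp (-|z| / b)))

instance (b : ℝ) : SigmaFinite (laplace b) := by
  unfold laplace
  infer_instance

open Set Real

lemma integrableOn_exp_div_Iic {b : ℝ} (hb : 0 < b) (a : ℝ) :
    IntegrableOn (fun z : ℝ => Real.exp (z / b)) (Iic a) := by
  have A : MeasurableEmbedding fun x : ℝ => -x :=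
    (Homeomorph.neg ℝ).isClosedEmbedding.measurableEmbedding
  have h1 : IntegrableOn (fun x : ℝ => Real.exp (-b⁻¹ * x)) (Ioi (-a)) :=
    exp_neg_integrableOn_Ioi _ (by positivity)
  have h2 : IntegrableOn (fun x : ℝ => Real.exp (-b⁻¹ * x)) (Ici (-a)) := by
    rwa [integrableOn_Ici_iff_integrableOn_Ioi]
  have hres : (volume : Measure ℝ).restrict (Iic a)
      = ((volume : Measure ℝ).restrict (Ici (-a))).map (fun x : ℝ => -x) := by
    conv_lhs => rw [← Measure.map_neg_eq_self (volume : Measure ℝ)]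
    rw [Measure.restrict_map A.measurable measurableSet_Iic]
    congr 1
    ext z
    simp [neg_le]
  rw [IntegrableOn, hres, A.integrable_map_iff]
  refine h2.congr_fun ?_ measurableSet_Ici
  intro z _
  simp [Function.comp, div_eq_inv_mul, mul_comm]

lemma integral_exp_div_Iic {b : ℝ} (hb : 0 < b) (a : ℝ) :
    ∫ z in Iic a, Real.exp (z / b) = b * Real.exp (a / b) := by
  have h := integral_comp_neg_Iic a (fun x : ℝ => Real.exp (-x / b))
  have h2 : ∫ x in Ioi (-a), Real.exp (-x / b) = b * Real.exp (a / b) := by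
    have := integral_comp_mul_left_Ioi (fun x : ℝ => Real.exp (-x)) (-a)
      (b := b⁻¹) (by positivity)
    simp only [smul_eq_mul, inv_inv] at this
    have e1 : (∫ x in Ioi (-a), Real.exp (-(b⁻¹ * x)))
        = b * ∫ x in Ioi (b⁻¹ * -a), Real.exp (-x) := this
    rw [integral_exp_neg_Ioi] at e1
    calc ∫ x in Ioi (-a), Real.exp (-x / b)
        = ∫ x in Ioi (-a), Real.exp (-(b⁻¹ * x)) := by
          congr 1; ext x; rw [neg_div, div_eq_inv_mul]
      _ = b * Real.exp (-(b⁻¹ * -a)) := e1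
      _ = b * Real.exp (a / b) := by
          congr 1; rw [mul_neg, neg_neg, div_eq_inv_mul]
  calc ∫ z in Iic a, Real.exp (z / b)
      = ∫ z in Iic a, Real.exp (-(-z) / b) := by simp
    _ = ∫ x in Ioi (-a), Real.exp (-x / b) := h
    _ = b * Real.exp (a / b) := h2

lemma laplace_Iic {b : ℝ} (hb : 0 < b) {a : ℝ} (ha : a ≤ 0) :
    laplace b (Iic a) = ENNReal.ofReal (Real.exp (a / b) / 2) := by
  rw [laplace, withDensity_apply _ measurableSet_Iic]
  have hcongr : ∀ z ∈ Iic a,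
      ENNReal.ofReal ((1 / (2 * b)) * Real.exp (-|z| / b))
        = ENNReal.ofReal ((1 / (2 * b)) * Real.exp (z / b)) := by
    intro z hz
    have hz0 : z ≤ 0 := le_trans hz ha
    rw [abs_of_nonpos hz0, neg_neg]
  rw [setLIntegral_congr_fun measurableSet_Iic hcongr]
  have hint : IntegrableOn (fun z : ℝ => (1 / (2 * b)) * Real.exp (z / b)) (Iic a) :=
    (integrableOn_exp_div_Iic hb a).const_mul _
  rw [← ofReal_integral_eq_lintegral_ofReal hint
    (Filter.Eventually.of_forall fun z => by positivity)]
  congr 1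
  rw [MeasureTheory.integral_const_mul, integral_exp_div_Iic hb a]
  field_simp

/-- The laplace measure is symmetric under negation. -/
lemma laplace_neg (b : ℝ) (s : Set ℝ) (hs : MeasurableSet s) :
    laplace b ((fun z : ℝ => -z) ⁻¹' s) = laplace b s := by
  have A : MeasurableEmbedding fun x : ℝ => -x :=
    (Homeomorph.neg ℝ).isClosedEmbedding.measurableEmbedding
  unfold laplace
  rw [withDensity_apply _ hs, withDensity_apply _ (A.measurable hs)]
  have hmeas : Measurable fun z : ℝ =>
      ENNReal.ofReal ((1 / (2 * b)) * Real.exp (-|z| / b)) := by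
    apply Measurable.ennreal_ofReal
    fun_prop
  have key := (Measure.measurePreserving_neg (volume : Measure ℝ)).setLIntegral_comp_preimage hs
    hmeas
  rw [← key]
  apply lintegral_congr
  intro z
  simp

lemma laplace_Ici {b : ℝ} (hb : 0 < b) {a : ℝ} (ha : 0 ≤ a) :
    laplace b (Ici a) = ENNReal.ofReal (Real.exp (-a / b) / 2) := by
  have : (fun z : ℝ => -z) ⁻¹' (Ici a) = Iic (-a) := by
    ext z; simp [le_neg]
  rw [← laplace_neg b (Ici a) measurableSet_Ici, this,
    laplace_Iic hb (by linarith), neg_div]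

theorem laplace_isProbability {b : ℝ} (hb : 0 < b) :
    IsProbabilityMeasure (laplace b) := by
  constructor
  have h0 : laplace b {(0 : ℝ)} = 0 := by
    refine (withDensity_absolutelyContinuous _ _) ?_
    simp
  have hsplit : (univ : Set ℝ) = Iic 0 ∪ Ici 0 := by
    ext z; simp [le_total]
  rw [hsplit]
  have hinter : Iic (0:ℝ) ∩ Ici 0 = {0} := by
    ext z; simp [le_antisymm_iff, and_comm]
  have hsum := measure_union_add_inter' (μ := laplace b) (s := Iic (0:ℝ))
    measurableSet_Iic (Ici (0:ℝ))
  rw [hinter, h0, add_zero] at hsum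
  rw [hsum, laplace_Iic hb le_rfl, laplace_Ici hb le_rfl,
    ← ENNReal.ofReal_add (by positivity) (by positivity)]
  norm_num

lemma laplace_Ici_of_nonpos {b : ℝ} (hb : 0 < b) {a : ℝ} (ha : a ≤ 0) :
    laplace b (Ici a) = ENNReal.ofReal (1 - Real.exp (a / b) / 2) := by
  have hP : IsProbabilityMeasure (laplace b) := laplace_isProbability hb
  have hcompl : Ici a = (Iio a)ᶜ := by ext z; simp [not_lt]
  have hIio : laplace b (Iio a) = ENNReal.ofReal (Real.exp (a / b) / 2) := by
    have h0 : laplace b {a} = 0 := by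
      refine (withDensity_absolutelyContinuous _ _) ?_; simp
    have hle1 : laplace b (Iic a) ≤ laplace b {a} + laplace b (Iio a) := by
      rw [← Set.Iio_insert, Set.insert_eq]
      exact measure_union_le _ _
    rw [h0, zero_add] at hle1
    have hle2 : laplace b (Iio a) ≤ laplace b (Iic a) :=
      measure_mono Iio_subset_Iic_self
    rw [le_antisymm hle2 hle1, laplace_Iic hb ha]
  rw [hcompl, measure_compl measurableSet_Iio (measure_ne_top _ _), hIio,
    measure_univ]
  rw [ENNReal.ofReal_sub _ (by positivity)]
  simp

lemma laplace_Iio_of_nonneg {b : ℝ} (hb : 0 < b) {a : ℝ} (ha : 0 ≤ a) :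
    laplace b (Iio a) = ENNReal.ofReal (1 - Real.exp (-a / b) / 2) := by
  have hP : IsProbabilityMeasure (laplace b) := laplace_isProbability hb
  have hcompl : Iio a = (Ici a)ᶜ := by ext z; simp [not_le]
  rw [hcompl, measure_compl measurableSet_Ici (measure_ne_top _ _),
    laplace_Ici hb ha, measure_univ, ENNReal.ofReal_sub _ (by positivity)]
  simp

/-- the sparse vector mechanism outputs `⊤` while the answers are far
below the threshold.
Let `Z ~ Laplace(2/ε)` and `Z_1, …, Z_T ~ Laplace(4c/ε)` be independent (modelled by a
product measure with first coordinate `Z` and second coordinate the vector of the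
`Z_t`).  Fix `t' ∈ [T]`.  If `x ≤ 0` and `q_t ≤ x + τ` for all `t ≤ t'`, then the
probability that `q_t + Z_t < τ + Z` for all `t ≤ t'` is at least
`1 − T·exp(xε/(8c))`.  (When this event occurs, the sparse vector mechanism with
threshold `τ`, privacy parameter `ε`, and cutoff `c` outputs `⊤` at every time step
`t ≤ t'`.) -/
theorem svt_outputs_top_when_below_threshold (ε : ℝ) (hε : 0 < ε) (c : ℕ) (hc : 1 ≤ c)
    (τ : ℝ) (T : ℕ) (q : Fin T → ℝ) (x : ℝ) (hx : x ≤ 0)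
    (t' : Fin T) (hq : ∀ t : Fin T, t ≤ t' → q t ≤ x + τ) :
    ENNReal.ofReal (1 - T * Real.exp (x * ε / (8 * c)))
      ≤ ((laplace (2 / ε)).prod (Measure.pi fun _ : Fin T => laplace (4 * c / ε)))
          {p : ℝ × (Fin T → ℝ) | ∀ t : Fin T, t ≤ t' → q t + p.2 t < τ + p.1} := by
  have hc0 : (0:ℝ) < c := by exact_mod_cast hc
  have hb1 : (0:ℝ) < 2 / ε := by positivity
  have hb2 : (0:ℝ) < 4 * c / ε := by positivity
  set μ := laplace (2 / ε)
  set ν := Measure.pi fun _ : Fin T => laplace (4 * c / ε)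
  -- The good event contains a product set.
  have hsub : (Ici (x/2)) ×ˢ (Set.pi univ fun _ : Fin T => Iio (-x/2))
      ⊆ {p : ℝ × (Fin T → ℝ) | ∀ t : Fin T, t ≤ t' → q t + p.2 t < τ + p.1} := by
    rintro ⟨z, f⟩ ⟨hz, hf⟩ t ht
    have h1 : q t ≤ x + τ := hq t ht
    have h2 : f t < -x/2 := hf t (mem_univ t)
    have h3 : x/2 ≤ z := hz
    simp only [Set.mem_setOf_eq]
    linarith
  refine le_trans ?_ (measure_mono hsub)
  rw [Measure.prod_prod, Measure.pi_pi]
  -- compute the two factors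
  set e₁ := Real.exp (x * ε / 4) with he₁
  set e₂ := Real.exp (x * ε / (8 * c)) with he₂
  have harg1 : x/2 / (2/ε) = x * ε / 4 := by field_simp; norm_num
  have hμA : μ (Ici (x/2)) = ENNReal.ofReal (1 - e₁ / 2) := by
    rw [show μ = laplace (2/ε) from rfl, laplace_Ici_of_nonpos hb1 (by linarith), harg1]
  have hνB : ∀ t : Fin T,
      laplace (4 * c / ε) (Iio (-x/2)) = ENNReal.ofReal (1 - e₂ / 2) := by
    intro t
    have harg2 : -(-x/2) / (4*(c:ℝ)/ε) = x * ε / (8*c) := by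
      field_simp
      ring
    rw [laplace_Iio_of_nonneg hb2 (by linarith), harg2]
  rw [hμA]
  rw [Finset.prod_congr rfl (fun t _ => hνB t), Finset.prod_const,
    Finset.card_univ, Fintype.card_fin]
  -- bounds on e₁, e₂
  have he₂pos : 0 < e₂ := Real.exp_pos _
  have he₂le : e₂ ≤ 1 := by
    rw [he₂, ← Real.exp_zero]
    apply Real.exp_le_exp.mpr
    apply div_nonpos_of_nonpos_of_nonneg
    · exact mul_nonpos_of_nonpos_of_nonneg hx hε.le
    · positivity
  have hc1 : (1:ℝ) ≤ c := by exact_mod_cast hc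
  have he₁le : e₁ ≤ e₂ := by
    apply Real.exp_le_exp.mpr
    rw [div_le_div_iff₀ (by norm_num) (by positivity)]
    have hxε : x * ε ≤ 0 := mul_nonpos_of_nonpos_of_nonneg hx hε.le
    have := mul_nonpos_of_nonpos_of_nonneg hxε
      (by linarith : (0:ℝ) ≤ 8 * (c:ℝ) - 4)
    nlinarith
  have h2 : (0:ℝ) ≤ 1 - e₂/2 := by linarith
  have h1 : (0:ℝ) ≤ 1 - e₁/2 := by linarith
  rw [← ENNReal.ofReal_pow h2, ← ENNReal.ofReal_mul h1]
  apply ENNReal.ofReal_le_ofReal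
  -- real inequality : 1 - T e₂ ≤ (1 - e₁/2)(1 - e₂/2)^T
  by_cases hT : 1 - (T:ℝ) * e₂ ≤ 0
  · have : (0:ℝ) ≤ (1 - e₁/2) * (1 - e₂/2)^T := by positivity
    linarith
  push_neg at hT
  have hT1 : (1:ℝ) ≤ T := by
    have : (0:ℕ) < T := t'.pos
    exact_mod_cast this
  have hbern : 1 - (T:ℝ) * (e₂/2) ≤ (1 - e₂/2)^T := by
    have := one_add_mul_le_pow (a := -(e₂/2)) (by linarith) T
    calc 1 - (T:ℝ) * (e₂/2) = 1 + T * -(e₂/2) := by ring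
      _ ≤ (1 + -(e₂/2))^T := this
      _ = (1 - e₂/2)^T := by ring_nf
  have hTs : (0:ℝ) ≤ 1 - T * (e₂/2) := by nlinarith
  have key : (1 - e₂/2) * (1 - T * (e₂/2)) ≤ (1 - e₁/2) * (1 - e₂/2)^T := by
    apply mul_le_mul (by linarith) hbern hTs h1
  nlinarith [mul_nonneg he₂pos.le (by linarith : (0:ℝ) ≤ (T:ℝ) - 1),
    mul_nonneg (mul_nonneg (by linarith : (0:ℝ) ≤ (T:ℝ)) he₂pos.le) he₂pos.le]
end

section
/- (Incremental edge-sensitivity of k-star counts.) Let k ≥ 1, D ∈ ℕ, and let f_kstars(S)_t denote the number of k-stars in flat(S_[t]), i.e., Σ_v C(deg(v), k) where the sum is over the vertices of flat(S_[t]). For every T ∈ ℕ and every pair of edge-neighboring insertion-only graph streams S, S' of length T whose flattened graphs flat(S_[T]) and flat(S'_[T]) have maximum degree at most D, the ℓ1 distance between the increment sequences satisfies Σ_{t=1}^{T} |inc_{f_kstars}(S)_t − inc_{f_kstars}(S')_t| ≤ 2·C(D−1, k−1); moreover, this bound is attained, even by a pair of such streams of length T = 1. -/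
open Finset

/-- A finite graph: a finite vertex set together with a finite set of undirected edges. -/
structure FinGraph where
  verts : Finset ℕ
  edges : Finset (Sym2 ℕ)

namespace FinGraph

/-- A finite graph is valid if every edge is a non-loop both of whose endpoints are vertices. -/
def Valid (G : FinGraph) : Prop :=
  ∀ e ∈ G.edges, ¬ e.IsDiag ∧ ∀ v ∈ e, v ∈ G.verts

/-- The degree of a vertex: the number of edges containing it. -/
def degree (G : FinGraph) (v : ℕ) : ℕ :=
  (G.edges.filter (fun e => v ∈ e)).card

/-- Remove a node and all of its adjacent edges. -/
def removeNode (G : FinGraph) (v : ℕ) : FinGraph :=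
  ⟨G.verts.erase v, G.edges.filter (fun e => v ∉ e)⟩

/-- Remove a single edge. -/
def removeEdge (G : FinGraph) (e : Sym2 ℕ) : FinGraph :=
  ⟨G.verts, G.edges.erase e⟩

/-- `G` is `(D, ℓ)`-bounded: it has at most `ℓ` nodes of degree greater than `D`. -/
def DLBounded (G : FinGraph) (D ℓ : ℕ) : Prop :=
  (G.verts.filter (fun v => D < G.degree v)).card ≤ ℓ

end FinGraph

/-- One graph is obtained from the other by removing one node and all of its adjacent edges. -/
def nodeNeighborGraph (G G' : FinGraph) : Prop :=
  (∃ v ∈ G.verts, G' = G.removeNode v) ∨ (∃ v ∈ G'.verts, G = G'.removeNode v)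

/-- `G'` is obtained from `G` by removing a single edge, an isolated node,
or a degree-one node together with its adjacent edge. -/
def edgeRemovalGraph (G G' : FinGraph) : Prop :=
  (∃ e ∈ G.edges, G' = G.removeEdge e) ∨
  (∃ v ∈ G.verts, G.degree v = 0 ∧ G' = FinGraph.mk (G.verts.erase v) G.edges) ∨
  (∃ v ∈ G.verts, G.degree v = 1 ∧ G' = G.removeNode v)

/-- Edge-neighboring graphs. -/
def edgeNeighborGraph (G G' : FinGraph) : Prop :=
  edgeRemovalGraph G G' ∨ edgeRemovalGraph G' G

/-- The length of a shortest chain of valid graphs from `A` to `B` in which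
consecutive graphs are related by `R`. -/
noncomputable def graphChainDist (R : FinGraph → FinGraph → Prop) (A B : FinGraph) : ℕ :=
  sInf {n | ∃ f : ℕ → FinGraph, f 0 = A ∧ f n = B ∧ (∀ i ≤ n, (f i).Valid) ∧
    ∀ i < n, R (f i) (f (i + 1))}

/-- Node distance between finite graphs. -/
noncomputable def graphNodeDist : FinGraph → FinGraph → ℕ := graphChainDist nodeNeighborGraph

/-- Edge distance between finite graphs. -/
noncomputable def graphEdgeDist : FinGraph → FinGraph → ℕ := graphChainDist edgeNeighborGraph

/-- An insertion-only graph stream: the nodes and edges arriving at each time step. -/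
structure GraphStream where
  nodes : ℕ → Finset ℕ
  edges : ℕ → Finset (Sym2 ℕ)

namespace GraphStream

/-- Validity of a graph stream of length `T`: arrivals happen only at times `1, …, T`,
no node or edge arrives twice, and every edge is a non-loop whose endpoints
arrive at or before the edge does. -/
def Valid (T : ℕ) (S : GraphStream) : Prop :=
  (∀ t, ((S.nodes t).Nonempty ∨ (S.edges t).Nonempty) → 1 ≤ t ∧ t ≤ T) ∧
  (∀ s t, s ≠ t → Disjoint (S.nodes s) (S.nodes t)) ∧
  (∀ s t, s ≠ t → Disjoint (S.edges s) (S.edges t)) ∧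
  (∀ t, ∀ e ∈ S.edges t, ¬ e.IsDiag ∧ ∀ v ∈ e, ∃ s ≤ t, v ∈ S.nodes s)

/-- The flattened graph of the stream through time `t`. -/
def flat (S : GraphStream) (t : ℕ) : FinGraph :=
  ⟨(Finset.range (t + 1)).biUnion S.nodes, (Finset.range (t + 1)).biUnion S.edges⟩

/-- Remove a node and all of its adjacent edges from a stream. -/
def removeNode (S : GraphStream) (v : ℕ) : GraphStream :=
  ⟨fun t => (S.nodes t).erase v, fun t => (S.edges t).filter (fun e => v ∉ e)⟩

/-- Remove a single edge from a stream. -/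
def removeEdge (S : GraphStream) (e : Sym2 ℕ) : GraphStream :=
  ⟨S.nodes, fun t => (S.edges t).erase e⟩

/-- Truncation of a stream: keep only arrivals at times `≤ t`. -/
def trunc (S : GraphStream) (t : ℕ) : GraphStream :=
  ⟨fun s => if s ≤ t then S.nodes s else ∅, fun s => if s ≤ t then S.edges s else ∅⟩

/-- `v` arrives at some point in the stream. -/
def hasNode (S : GraphStream) (v : ℕ) : Prop :=
  ∃ t, v ∈ S.nodes t

/-- The stream is `(D, ℓ)`-bounded through time `t`. -/
def DLBoundedThrough (S : GraphStream) (D ℓ t : ℕ) : Prop :=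
  (S.flat t).DLBounded D ℓ

end GraphStream

/-- `S'` is obtained from `S` by removing one node and all of its adjacent edges
(which may arrive at many time steps). -/
def nodeRemovalStream (S S' : GraphStream) : Prop :=
  ∃ v, S.hasNode v ∧ S' = S.removeNode v

/-- Node-neighboring streams. -/
def nodeNeighborStream (S S' : GraphStream) : Prop :=
  nodeRemovalStream S S' ∨ nodeRemovalStream S' S

/-- `S'` is obtained from the length-`T` stream `S` by removing a single edge,
an isolated node, or a degree-one node together with its adjacent edge. -/
def edgeRemovalStream (T : ℕ) (S S' : GraphStream) : Prop :=
  (∃ t, ∃ e ∈ S.edges t, S' = S.removeEdge e) ∨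
  (∃ v, S.hasNode v ∧ (S.flat T).degree v ≤ 1 ∧ S' = S.removeNode v)

/-- Edge-neighboring streams (of length `T`). -/
def edgeNeighborStream (T : ℕ) (S S' : GraphStream) : Prop :=
  edgeRemovalStream T S S' ∨ edgeRemovalStream T S' S

/-- Length of a shortest chain of valid streams of length `T` in which consecutive
streams are related by `R`. -/
noncomputable def streamChainDist (T : ℕ) (R : GraphStream → GraphStream → Prop)
    (A B : GraphStream) : ℕ :=
  sInf {n | ∃ f : ℕ → GraphStream, f 0 = A ∧ f n = B ∧ (∀ i ≤ n, (f i).Valid T) ∧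
    ∀ i < n, R (f i) (f (i + 1))}

/-- Node distance between streams of length `T`. -/
noncomputable def streamNodeDist (T : ℕ) : GraphStream → GraphStream → ℕ :=
  streamChainDist T nodeNeighborStream

/-- Edge distance between streams of length `T`. -/
noncomputable def streamEdgeDist (T : ℕ) : GraphStream → GraphStream → ℕ :=
  streamChainDist T (edgeNeighborStream T)

/-- A fixed injective key on undirected edges, providing the consistent total order in
which edges arriving at the same time step are processed. -/
def edgeKey : Sym2 ℕ → ℕ :=
  Sym2.lift ⟨fun a b => Nat.pair (min a b) (max a b), fun a b => by
    dsimp only; rw [inf_comm, sup_comm]⟩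

/-- The two endpoints of an edge, as an ordered pair. -/
def endpointsOf (e : Sym2 ℕ) : ℕ × ℕ := (edgeKey e).unpair

/-- The edges of a finite edge set, listed in increasing `edgeKey` order. -/
def sortEdges (E : Finset (Sym2 ℕ)) : List (Sym2 ℕ) :=
  ((E.image edgeKey).sort (· ≤ ·)).map fun k => s(k.unpair.1, k.unpair.2)

/-- All edges of a stream of length `T`, tagged with their arrival times, in processing
order: lexicographically by (arrival time, consistent edge order). -/
def GraphStream.procList (S : GraphStream) (T : ℕ) : List (ℕ × Sym2 ℕ) :=
  (List.range (T + 1)).flatMap fun t => (sortEdges (S.edges t)).map fun e => (t, e)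

/-- One step of the greedy projection with degree bound `D`.  The state consists of the
degree counters together with the edges kept so far (indexed by arrival time).
If `bbds = true` the counters of the endpoints are incremented for every processed edge
(the BBDS rule); if `bbds = false` they are incremented only when the edge is kept
(the DLL rule). -/
def projStep (D : ℕ) (bbds : Bool) (st : (ℕ → ℕ) × (ℕ → Finset (Sym2 ℕ)))
    (p : ℕ × Sym2 ℕ) : (ℕ → ℕ) × (ℕ → Finset (Sym2 ℕ)) :=
  let d := st.1
  let u := (endpointsOf p.2).1
  let v := (endpointsOf p.2).2
  let keep : Bool := decide (d u < D ∧ d v < D)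
  ((if bbds || keep then fun w => if w = u ∨ w = v then d w + 1 else d w else d),
   (if keep then fun s => if s = p.1 then insert p.2 (st.2 s) else st.2 s else st.2))

/-- The time-aware projection with degree bound `D` on streams of length `T`:
the BBDS projection if `bbds = true` and the DLL projection if `bbds = false`.
All arriving nodes are kept; an arriving edge is kept (at its arrival time) iff both of
its endpoints have counter value `< D` when the edge is processed. -/
def project (bbds : Bool) (D T : ℕ) (S : GraphStream) : GraphStream :=
  ⟨S.nodes,
   ((S.procList T).foldl (projStep D bbds)
      ((fun _ => 0 : ℕ → ℕ), (fun _ => ∅ : ℕ → Finset (Sym2 ℕ)))).2⟩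

/-- The BBDS projection `Π^BBDS_D` on streams of length `T`. -/
def projBBDS (D T : ℕ) : GraphStream → GraphStream := project true D T

/-- The DLL projection `Π^DLL_D` on streams of length `T`. -/
def projDLL (D T : ℕ) : GraphStream → GraphStream := project false D T

/-- The number of `k`-stars of a finite graph: `∑_v C(deg v, k)`. -/
def FinGraph.kstarCount (G : FinGraph) (k : ℕ) : ℕ :=
  ∑ v ∈ G.verts, (G.degree v).choose k

section Aux

/-! ### Auxiliary lemmas -/

lemma aux_degree_mono {G H : FinGraph} (h : G.edges ⊆ H.edges) (v : ℕ) :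
    G.degree v ≤ H.degree v :=
  Finset.card_le_card (Finset.filter_subset_filter _ h)

lemma aux_flat_edges_mono (S : GraphStream) {t t' : ℕ} (h : t ≤ t') :
    (S.flat t).edges ⊆ (S.flat t').edges :=
  Finset.biUnion_subset_biUnion_of_subset_left _ (Finset.range_subset_range.2 (by omega))

lemma aux_flat_removeEdge (S : GraphStream) (e : Sym2 ℕ) (t : ℕ) :
    (S.removeEdge e).flat t = (S.flat t).removeEdge e := by
  unfold GraphStream.flat GraphStream.removeEdge FinGraph.removeEdge
  simp only [FinGraph.mk.injEq]
  refine ⟨by trivial, ?_⟩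
  ext f
  simp only [Finset.mem_biUnion, Finset.mem_erase]
  tauto

lemma aux_flat_removeNode (S : GraphStream) (v : ℕ) (t : ℕ) :
    (S.removeNode v).flat t = (S.flat t).removeNode v := by
  unfold GraphStream.flat GraphStream.removeNode FinGraph.removeNode
  simp only [FinGraph.mk.injEq]
  constructor
  · ext w; simp only [Finset.mem_biUnion, Finset.mem_erase]; tauto
  · ext f; simp only [Finset.mem_biUnion, Finset.mem_filter]; tauto

lemma aux_degree_removeEdge_of_not_mem (G : FinGraph) {e : Sym2 ℕ} {v : ℕ} (h : v ∉ e) :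
    (G.removeEdge e).degree v = G.degree v := by
  unfold FinGraph.removeEdge FinGraph.degree
  congr 1
  ext f
  simp only [Finset.mem_filter, Finset.mem_erase]
  constructor
  · tauto
  · rintro ⟨hf, hv⟩
    exact ⟨⟨fun hfe => h (hfe ▸ hv), hf⟩, hv⟩

lemma aux_degree_removeEdge_of_mem (G : FinGraph) {e : Sym2 ℕ} {v : ℕ}
    (he : e ∈ G.edges) (h : v ∈ e) :
    (G.removeEdge e).degree v = G.degree v - 1 := by
  unfold FinGraph.removeEdge FinGraph.degree
  have heq : (G.edges.erase e).filter (fun f => v ∈ f)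
      = (G.edges.filter (fun f => v ∈ f)).erase e := by
    ext f
    simp only [Finset.mem_filter, Finset.mem_erase]
    tauto
  rw [heq, Finset.card_erase_of_mem (Finset.mem_filter.2 ⟨he, h⟩)]

lemma aux_one_le_degree {G : FinGraph} {e : Sym2 ℕ} {v : ℕ}
    (he : e ∈ G.edges) (h : v ∈ e) : 1 ≤ G.degree v := by
  have : e ∈ G.edges.filter (fun f => v ∈ f) := Finset.mem_filter.2 ⟨he, h⟩
  exact Finset.card_pos.2 ⟨e, this⟩

lemma aux_choose_sub_one {n j : ℕ} (hn : 1 ≤ n) (hj : 1 ≤ j) :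
    n.choose j = (n - 1).choose j + (n - 1).choose (j - 1) := by
  obtain ⟨m, rfl⟩ : ∃ m, n = m + 1 := ⟨n - 1, by omega⟩
  obtain ⟨i, rfl⟩ : ∃ i, j = i + 1 := ⟨j - 1, by omega⟩
  simp [Nat.choose_succ_succ]
  omega

lemma aux_kstar_removeEdge (G : FinGraph) {a b : ℕ} (hab : a ≠ b)
    (he : s(a, b) ∈ G.edges) (ha : a ∈ G.verts) (hb : b ∈ G.verts) {k : ℕ} (hk : 1 ≤ k) :
    G.kstarCount k = (G.removeEdge s(a, b)).kstarCount k
      + (G.degree a - 1).choose (k - 1) + (G.degree b - 1).choose (k - 1) := by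
  have hbb : b ∈ G.verts.erase a := Finset.mem_erase.2 ⟨hab.symm, hb⟩
  have hsplit : ∀ f : ℕ → ℕ, ∑ v ∈ G.verts, f v
      = ∑ v ∈ (G.verts.erase a).erase b, f v + f b + f a := by
    intro f
    rw [← Finset.sum_erase_add G.verts f ha, ← Finset.sum_erase_add (G.verts.erase a) f hbb]
  have hverts : (G.removeEdge s(a, b)).verts = G.verts := rfl
  unfold FinGraph.kstarCount
  rw [hverts, hsplit, hsplit]
  have hcongr : ∑ v ∈ (G.verts.erase a).erase b, ((G.removeEdge s(a, b)).degree v).choose k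
      = ∑ v ∈ (G.verts.erase a).erase b, (G.degree v).choose k := by
    apply Finset.sum_congr rfl
    intro v hv
    simp only [Finset.mem_erase] at hv
    have : v ∉ s(a, b) := by
      rw [Sym2.mem_iff]
      push_neg
      exact ⟨hv.2.1, hv.1⟩
    rw [aux_degree_removeEdge_of_not_mem G this]
  rw [hcongr]
  have hda : (G.removeEdge s(a, b)).degree a = G.degree a - 1 :=
    aux_degree_removeEdge_of_mem G he (Sym2.mem_mk_left a b)
  have hdb : (G.removeEdge s(a, b)).degree b = G.degree b - 1 :=
    aux_degree_removeEdge_of_mem G he (Sym2.mem_mk_right a b)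
  have h1a : 1 ≤ G.degree a := aux_one_le_degree he (Sym2.mem_mk_left a b)
  have h1b : 1 ≤ G.degree b := aux_one_le_degree he (Sym2.mem_mk_right a b)
  rw [hda, hdb, aux_choose_sub_one h1a hk, aux_choose_sub_one h1b hk]
  ring

lemma aux_no_edge_of_degree_zero {G : FinGraph} {v : ℕ} (hd : G.degree v = 0) :
    ∀ e ∈ G.edges, v ∉ e := by
  intro e he hv
  have hmem : e ∈ G.edges.filter (fun f => v ∈ f) := Finset.mem_filter.2 ⟨he, hv⟩
  rw [FinGraph.degree, Finset.card_eq_zero] at hd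
  rw [hd] at hmem
  exact absurd hmem (Finset.notMem_empty e)

lemma aux_removeNode_eq_of_not_mem {G : FinGraph} {v : ℕ} (hv : v ∉ G.verts)
    (hd : G.degree v = 0) : G.removeNode v = G := by
  unfold FinGraph.removeNode
  have h1 : G.verts.erase v = G.verts := Finset.erase_eq_of_notMem hv
  have h2 : G.edges.filter (fun e => v ∉ e) = G.edges :=
    Finset.filter_eq_self.2 (fun e he => aux_no_edge_of_degree_zero hd e he)
  rw [h1, h2]

lemma aux_kstar_removeNode_of_degree_zero {G : FinGraph} {v : ℕ} (hv : v ∈ G.verts)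
    (hd : G.degree v = 0) {k : ℕ} (hk : 1 ≤ k) :
    (G.removeNode v).kstarCount k = G.kstarCount k := by
  have hedges : (G.removeNode v).edges = G.edges :=
    Finset.filter_eq_self.2 (fun e he => aux_no_edge_of_degree_zero hd e he)
  have hdeg : ∀ w, (G.removeNode v).degree w = G.degree w := by
    intro w
    unfold FinGraph.degree
    rw [hedges]
  unfold FinGraph.kstarCount
  have hverts : (G.removeNode v).verts = G.verts.erase v := rfl
  rw [hverts]
  rw [← Finset.sum_erase_add G.verts _ hv]
  have : (G.degree v).choose k = 0 := by
    rw [hd]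
    exact Nat.choose_eq_zero_of_lt hk
  rw [this, add_zero]
  apply Finset.sum_congr rfl
  intro w _
  rw [hdeg]

lemma aux_kstar_removeNode_of_degree_one {G : FinGraph} {v u : ℕ} (hvu : v ≠ u)
    (hv : v ∈ G.verts) (hu : u ∈ G.verts)
    (huniq : G.edges.filter (fun f => v ∈ f) = {s(v, u)}) {k : ℕ} (hk : 1 ≤ k) :
    G.kstarCount k = (G.removeNode v).kstarCount k
      + Nat.choose 0 (k - 1) + (G.degree u - 1).choose (k - 1) := by
  have he : s(v, u) ∈ G.edges := by
    have : s(v, u) ∈ G.edges.filter (fun f => v ∈ f) := by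
      rw [huniq]; exact Finset.mem_singleton_self _
    exact (Finset.mem_filter.1 this).1
  have hdv : G.degree v = 1 := by
    rw [FinGraph.degree, huniq, Finset.card_singleton]
  -- the removed-edge graph
  have hG'deg : (G.removeEdge s(v, u)).degree v = 0 := by
    rw [aux_degree_removeEdge_of_mem G he (Sym2.mem_mk_left v u), hdv]
  -- removing the node v from G equals removing it from the removed-edge graph
  have hstep : G.removeNode v = (G.removeEdge s(v, u)).removeNode v := by
    show (⟨G.verts.erase v, G.edges.filter (fun f => v ∉ f)⟩ : FinGraph)
      = ⟨G.verts.erase v, (G.edges.erase s(v, u)).filter (fun f => v ∉ f)⟩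
    simp only [FinGraph.mk.injEq, true_and]
    ext f
    simp only [Finset.mem_filter, Finset.mem_erase]
    constructor
    · rintro ⟨hf, hvf⟩
      refine ⟨⟨?_, hf⟩, hvf⟩
      rintro rfl
      exact hvf (Sym2.mem_mk_left v u)
    · rintro ⟨⟨hfe, hf⟩, hvf⟩
      exact ⟨hf, hvf⟩
  have hkey := aux_kstar_removeEdge G hvu he hv hu hk
  rw [hdv] at hkey
  have hzero : (G.removeNode v).kstarCount k = (G.removeEdge s(v, u)).kstarCount k := by
    rw [hstep]
    exact @aux_kstar_removeNode_of_degree_zero (G.removeEdge s(v, u)) v hv hG'deg k hk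
  rw [hzero]
  simpa using hkey

lemma aux_telescope (F : ℕ → ℤ) : ∀ T : ℕ, ∑ t ∈ Finset.Icc 1 T, (F t - F (t - 1)) = F T - F 0 := by
  intro T
  induction T with
  | zero => simp
  | succ n ih =>
    rw [Finset.sum_Icc_succ_top (by omega : 1 ≤ n + 1), ih]
    simp only [Nat.add_sub_cancel]
    ring

lemma aux_sum_abs_le (F : ℕ → ℤ) (T : ℕ) (B : ℤ)
    (h0 : F 0 = 0) (hmono : ∀ t, 1 ≤ t → t ≤ T → F (t - 1) ≤ F t) (hT : F T ≤ B) :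
    ∑ t ∈ Finset.Icc 1 T, |F t - F (t - 1)| ≤ B := by
  have heq : ∑ t ∈ Finset.Icc 1 T, |F t - F (t - 1)|
      = ∑ t ∈ Finset.Icc 1 T, (F t - F (t - 1)) := by
    apply Finset.sum_congr rfl
    intro t ht
    rw [Finset.mem_Icc] at ht
    exact abs_of_nonneg (by linarith [hmono t ht.1 ht.2])
  rw [heq, aux_telescope, h0]
  linarith

lemma aux_flat_zero_edges {T : ℕ} {S : GraphStream} (hS : S.Valid T) :
    (S.flat 0).edges = ∅ := by
  rw [Finset.eq_empty_iff_forall_notMem]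
  intro e he
  obtain ⟨s, hs, hes⟩ := Finset.mem_biUnion.1 he
  simp only [Finset.mem_range] at hs
  interval_cases s
  have := hS.1 0 (Or.inr ⟨e, hes⟩)
  omega

lemma aux_endpoints_mem {T : ℕ} {S : GraphStream} (hS : S.Valid T) {t : ℕ} {e : Sym2 ℕ}
    (he : e ∈ (S.flat t).edges) : ∀ v ∈ e, v ∈ (S.flat t).verts := by
  intro v hv
  obtain ⟨s, hs, hes⟩ := Finset.mem_biUnion.1 he
  obtain ⟨s', hs', hv'⟩ := (hS.2.2.2 s e hes).2 v hv
  simp only [Finset.mem_range] at hs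
  exact Finset.mem_biUnion.2 ⟨s', Finset.mem_range.2 (by omega), hv'⟩

lemma aux_flat_nondiag {T : ℕ} {S : GraphStream} (hS : S.Valid T) {t : ℕ} {e : Sym2 ℕ}
    (he : e ∈ (S.flat t).edges) : ¬ e.IsDiag := by
  obtain ⟨s, _, hes⟩ := Finset.mem_biUnion.1 he
  exact (hS.2.2.2 s e hes).1

end Aux

section Forward

lemma aux_sum_abs_le' (f g : ℕ → ℤ) (T : ℕ) (B : ℤ)
    (h0 : f 0 - g 0 = 0)
    (hmono : ∀ t, 1 ≤ t → t ≤ T → f (t - 1) - g (t - 1) ≤ f t - g t)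
    (hT : f T - g T ≤ B) :
    ∑ t ∈ Finset.Icc 1 T, |(f t - g t) - (f (t - 1) - g (t - 1))| ≤ B :=
  aux_sum_abs_le (fun t => f t - g t) T B h0 hmono hT

/-- Main inequality for the asymmetric edge-removal relation. -/
lemma forward_bound (k D T : ℕ) (hk : 1 ≤ k) (S S' : GraphStream)
    (hS : S.Valid T) (h : edgeRemovalStream T S S')
    (hdeg : ∀ v, (S.flat T).degree v ≤ D) :
    ∑ t ∈ Finset.Icc 1 T,
        |((((S.flat t).kstarCount k : ℤ) - ((S'.flat t).kstarCount k : ℤ))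
          - (((S.flat (t - 1)).kstarCount k : ℤ) - ((S'.flat (t - 1)).kstarCount k : ℤ)))|
      ≤ 2 * ((D - 1).choose (k - 1) : ℤ) := by
  have hBnn : (0 : ℤ) ≤ 2 * ((D - 1).choose (k - 1) : ℤ) := by positivity
  rcases h with ⟨t0, e, he0, rfl⟩ | ⟨v, hvnode, hdegv, rfl⟩
  · -- edge removal case
    have hnd : ¬ e.IsDiag := (hS.2.2.2 t0 e he0).1
    induction e using Sym2.ind with
    | _ a b =>
    have hab : a ≠ b := fun hEq => hnd (by rw [hEq]; exact Sym2.mk_isDiag_iff.2 rfl)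
    have formula : ∀ t,
        ((S.flat t).kstarCount k : ℤ) - (((S.removeEdge s(a, b)).flat t).kstarCount k : ℤ)
        = if s(a, b) ∈ (S.flat t).edges
          then (((((S.flat t).degree a - 1).choose (k - 1)
            + ((S.flat t).degree b - 1).choose (k - 1) : ℕ)) : ℤ) else 0 := by
      intro t
      rw [aux_flat_removeEdge]
      split_ifs with hmem
      · have ha : a ∈ (S.flat t).verts :=
          aux_endpoints_mem hS hmem a (Sym2.mem_mk_left a b)
        have hb : b ∈ (S.flat t).verts :=
          aux_endpoints_mem hS hmem b (Sym2.mem_mk_right a b)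
        have hkey := aux_kstar_removeEdge (S.flat t) hab hmem ha hb hk
        push_cast [hkey]
        ring
      · have heq : (S.flat t).removeEdge s(a, b) = S.flat t := by
          show (⟨(S.flat t).verts, (S.flat t).edges.erase s(a, b)⟩ : FinGraph) = S.flat t
          rw [Finset.erase_eq_of_notMem hmem]
        rw [heq, sub_self]
    apply aux_sum_abs_le'
    · rw [formula 0, if_neg]
      rw [aux_flat_zero_edges hS]
      exact Finset.notMem_empty _
    · intro t h1 ht
      rw [formula (t - 1), formula t]
      by_cases hmem : s(a, b) ∈ (S.flat (t - 1)).edges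
      · have hmem' : s(a, b) ∈ (S.flat t).edges :=
          aux_flat_edges_mono S (by omega) hmem
        rw [if_pos hmem, if_pos hmem']
        have hmono := aux_degree_mono (aux_flat_edges_mono S (show t - 1 ≤ t by omega))
        exact_mod_cast add_le_add
          (Nat.choose_le_choose _ (Nat.sub_le_sub_right (hmono a) 1))
          (Nat.choose_le_choose _ (Nat.sub_le_sub_right (hmono b) 1))
      · rw [if_neg hmem]
        split_ifs
        · positivity
        · exact le_refl 0
    · rw [formula T]
      split_ifs
      · have hA : ((S.flat T).degree a - 1).choose (k - 1) ≤ (D - 1).choose (k - 1) :=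
          Nat.choose_le_choose _ (by have := hdeg a; omega)
        have hB : ((S.flat T).degree b - 1).choose (k - 1) ≤ (D - 1).choose (k - 1) :=
          Nat.choose_le_choose _ (by have := hdeg b; omega)
        push_cast
        omega
      · exact hBnn
  · -- node removal case
    have hFzero : ∀ t, (S.flat t).degree v = 0 →
        ((S.flat t).kstarCount k : ℤ) - (((S.removeNode v).flat t).kstarCount k : ℤ) = 0 := by
      intro t hd0
      rw [aux_flat_removeNode]
      by_cases hv : v ∈ (S.flat t).verts
      · rw [aux_kstar_removeNode_of_degree_zero hv hd0 hk, sub_self]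
      · rw [aux_removeNode_eq_of_not_mem hv hd0, sub_self]
    rcases Nat.le_one_iff_eq_zero_or_eq_one.1 hdegv with hdv | hdv
    · -- degree 0 at time T
      have hzero : ∀ t, t ≤ T →
          ((S.flat t).kstarCount k : ℤ) - (((S.removeNode v).flat t).kstarCount k : ℤ) = 0 := by
        intro t ht
        apply hFzero t
        have := aux_degree_mono (aux_flat_edges_mono S ht) v
        omega
      apply aux_sum_abs_le'
      · exact hzero 0 (by omega)
      · intro t h1 ht
        rw [hzero (t - 1) (by omega), hzero t ht]
      · rw [hzero T le_rfl]
        exact hBnn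
    · -- degree 1 at time T
      rw [FinGraph.degree] at hdv
      obtain ⟨e, he⟩ := Finset.card_eq_one.1 hdv
      have heT : e ∈ (S.flat T).edges ∧ v ∈ e := by
        have hmem : e ∈ (S.flat T).edges.filter (fun f => v ∈ f) := by
          rw [he]; exact Finset.mem_singleton_self _
        exact Finset.mem_filter.1 hmem
      have hnd : ¬ e.IsDiag := aux_flat_nondiag hS heT.1
      obtain ⟨u, rfl⟩ := Sym2.mem_iff_exists.1 heT.2
      have hvu : v ≠ u := fun hEq => hnd (Sym2.mk_isDiag_iff.2 hEq)
      have formula : ∀ t, t ≤ T →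
          ((S.flat t).kstarCount k : ℤ) - (((S.removeNode v).flat t).kstarCount k : ℤ)
          = if s(v, u) ∈ (S.flat t).edges
            then (((Nat.choose 0 (k - 1)
              + ((S.flat t).degree u - 1).choose (k - 1) : ℕ)) : ℤ) else 0 := by
        intro t ht
        split_ifs with hmem
        · have huniq : (S.flat t).edges.filter (fun f => v ∈ f) = {s(v, u)} := by
            apply Finset.Subset.antisymm
            · intro f hf
              have hf' : f ∈ (S.flat T).edges.filter (fun g => v ∈ g) := by
                rw [Finset.mem_filter] at hf ⊢
                exact ⟨aux_flat_edges_mono S ht hf.1, hf.2⟩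
              rw [he] at hf'
              exact hf'
            · rw [Finset.singleton_subset_iff, Finset.mem_filter]
              exact ⟨hmem, Sym2.mem_mk_left v u⟩
          have hvmem : v ∈ (S.flat t).verts :=
            aux_endpoints_mem hS hmem v (Sym2.mem_mk_left v u)
          have humem : u ∈ (S.flat t).verts :=
            aux_endpoints_mem hS hmem u (Sym2.mem_mk_right v u)
          have hkey := aux_kstar_removeNode_of_degree_one hvu hvmem humem huniq hk
          rw [aux_flat_removeNode]
          push_cast [hkey]
          ring
        · apply hFzero t
          have hsub : (S.flat t).edges.filter (fun f => v ∈ f) ⊆ {s(v, u)} := by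
            intro f hf
            rw [← he, Finset.mem_filter]
            rw [Finset.mem_filter] at hf
            exact ⟨aux_flat_edges_mono S ht hf.1, hf.2⟩
          rw [FinGraph.degree, Finset.card_eq_zero, Finset.eq_empty_iff_forall_notMem]
          intro f hf
          have hfs := hsub hf
          rw [Finset.mem_singleton] at hfs
          subst hfs
          exact hmem (Finset.mem_filter.1 hf).1
      apply aux_sum_abs_le'
      · rw [formula 0 (by omega), if_neg]
        rw [aux_flat_zero_edges hS]
        exact Finset.notMem_empty _
      · intro t h1 ht
        rw [formula (t - 1) (by omega), formula t ht]
        by_cases hmem : s(v, u) ∈ (S.flat (t - 1)).edges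
        · have hmem' : s(v, u) ∈ (S.flat t).edges :=
            aux_flat_edges_mono S (by omega) hmem
          rw [if_pos hmem, if_pos hmem']
          have hmono := aux_degree_mono (aux_flat_edges_mono S (show t - 1 ≤ t by omega))
          exact_mod_cast add_le_add le_rfl
            (Nat.choose_le_choose _ (Nat.sub_le_sub_right (hmono u) 1))
        · rw [if_neg hmem]
          split_ifs
          · positivity
          · exact le_refl 0
      · rw [formula T le_rfl]
        split_ifs
        · have h0 : Nat.choose 0 (k - 1) ≤ (D - 1).choose (k - 1) :=
            Nat.choose_le_choose _ (Nat.zero_le _)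
          have hu : ((S.flat T).degree u - 1).choose (k - 1) ≤ (D - 1).choose (k - 1) :=
            Nat.choose_le_choose _ (by have := hdeg u; omega)
          push_cast
          omega
        · exact hBnn

end Forward

section Witness

/-- The `i`-th edge of the double star with bound `D`. -/
def dsEdge (D i : ℕ) : Sym2 ℕ := if i < D then s(0, i + 1) else s(1, i + 1)

/-- The double-star witness stream: vertices `0, …, 2D-1`, the center edge `s(0,1)`,
`D-1` extra leaves on `0` and `D-1` extra leaves on `1`, all arriving at time `1`. -/
def doubleStar (D : ℕ) : GraphStream :=
  ⟨fun t => if t = 1 then Finset.range (2 * D) else ∅,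
   fun t => if t = 1 then (Finset.range (2 * D - 1)).image (dsEdge D) else ∅⟩

lemma mem_dsEdge {D i v : ℕ} :
    v ∈ dsEdge D i ↔ (if i < D then v = 0 ∨ v = i + 1 else v = 1 ∨ v = i + 1) := by
  unfold dsEdge
  split_ifs <;> simp [Sym2.mem_iff]

lemma dsEdge_injOn (D : ℕ) : Set.InjOn (dsEdge D) (Finset.range (2 * D - 1)) := by
  intro i hi j hj hij
  simp only [Finset.coe_range, Set.mem_Iio] at hi hj
  unfold dsEdge at hij
  split_ifs at hij <;> rw [Sym2.eq_iff] at hij <;> omega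

lemma doubleStar_flat_one (D : ℕ) :
    (doubleStar D).flat 1
      = ⟨Finset.range (2 * D), (Finset.range (2 * D - 1)).image (dsEdge D)⟩ := by
  have h2 : Finset.range 2 = {0, 1} := rfl
  unfold GraphStream.flat doubleStar
  simp only [FinGraph.mk.injEq, h2]
  constructor <;>
  · ext x
    simp only [Finset.mem_biUnion, Finset.mem_insert, Finset.mem_singleton]
    constructor
    · rintro ⟨i, hi | hi, hx⟩ <;> subst hi <;> simp_all
    · intro hx
      exact ⟨1, Or.inr rfl, by simpa using hx⟩

lemma doubleStar_degree (D v : ℕ) :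
    ((doubleStar D).flat 1).degree v
      = ((Finset.range (2 * D - 1)).filter (fun i => v ∈ dsEdge D i)).card := by
  rw [doubleStar_flat_one]
  show (((Finset.range (2 * D - 1)).image (dsEdge D)).filter (fun e => v ∈ e)).card = _
  rw [Finset.filter_image]
  exact Finset.card_image_of_injOn
    ((dsEdge_injOn D).mono (by exact_mod_cast Finset.filter_subset _ _))

lemma doubleStar_degree_zero (D : ℕ) (hD : 1 ≤ D) : ((doubleStar D).flat 1).degree 0 = D := by
  rw [doubleStar_degree]
  have : (Finset.range (2 * D - 1)).filter (fun i => (0 : ℕ) ∈ dsEdge D i)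
      = Finset.range D := by
    ext i
    simp only [Finset.mem_filter, Finset.mem_range, mem_dsEdge]
    split_ifs <;> first | omega | (simp only [true_or, false_or, or_false, iff_true, iff_false, true_iff, false_iff, and_true, and_false]; omega)
  rw [this, Finset.card_range]

lemma doubleStar_degree_one (D : ℕ) (hD : 1 ≤ D) : ((doubleStar D).flat 1).degree 1 = D := by
  rw [doubleStar_degree]
  have : (Finset.range (2 * D - 1)).filter (fun i => (1 : ℕ) ∈ dsEdge D i)
      = insert 0 (Finset.Ico D (2 * D - 1)) := by
    ext i
    simp only [Finset.mem_filter, Finset.mem_range, mem_dsEdge, Finset.mem_insert,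
      Finset.mem_Ico]
    split_ifs <;> first | omega | (simp only [true_or, false_or, or_false, iff_true, iff_false, true_iff, false_iff, and_true, and_false]; omega)
  rw [this, Finset.card_insert_of_notMem (by simp; omega), Nat.card_Ico]
  omega

lemma doubleStar_degree_le (D : ℕ) (hD : 1 ≤ D) (v : ℕ) :
    ((doubleStar D).flat 1).degree v ≤ D := by
  by_cases h0 : v = 0
  · rw [h0, doubleStar_degree_zero D hD]
  by_cases h1 : v = 1
  · rw [h1, doubleStar_degree_one D hD]
  rw [doubleStar_degree]
  calc ((Finset.range (2 * D - 1)).filter (fun i => v ∈ dsEdge D i)).card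
      ≤ ({v - 1} : Finset ℕ).card := by
        apply Finset.card_le_card
        intro i hi
        simp only [Finset.mem_filter, Finset.mem_range, mem_dsEdge] at hi
        simp only [Finset.mem_singleton]
        rcases hi with ⟨_, hmem⟩
        split_ifs at hmem <;> omega
    _ = 1 := Finset.card_singleton _
    _ ≤ D := hD

lemma doubleStar_valid (D : ℕ) (hD : 1 ≤ D) : (doubleStar D).Valid 1 := by
  refine ⟨?_, ?_, ?_, ?_⟩
  · intro t ht
    by_cases h1 : t = 1
    · omega
    · exfalso
      rcases ht with ⟨x, hx⟩ | ⟨x, hx⟩ <;> simp [doubleStar, h1] at hx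
  · intro s t hst
    by_cases hs : s = 1 <;> by_cases ht : t = 1 <;> simp_all [doubleStar]
  · intro s t hst
    by_cases hs : s = 1 <;> by_cases ht : t = 1 <;> simp_all [doubleStar]
  · intro t f hf
    by_cases h1 : t = 1
    · subst h1
      simp only [doubleStar, if_pos rfl] at hf
      obtain ⟨i, hi, rfl⟩ := Finset.mem_image.1 hf
      simp only [Finset.mem_range] at hi
      constructor
      · unfold dsEdge
        split_ifs <;> simp only [Sym2.mk_isDiag_iff] <;> omega
      · intro w hw
        refine ⟨1, le_rfl, ?_⟩
        have hw2 : w < 2 * D := by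
          rw [mem_dsEdge] at hw
          split_ifs at hw <;> omega
        exact Finset.mem_range.2 hw2
    · exfalso
      simp [doubleStar, h1] at hf

lemma doubleStar_center_mem (D : ℕ) (hD : 1 ≤ D) :
    s(0, 1) ∈ (doubleStar D).edges 1 := by
  simp only [doubleStar, if_pos rfl]
  refine Finset.mem_image.2 ⟨0, Finset.mem_range.2 (by omega), ?_⟩
  unfold dsEdge
  rw [if_pos (show 0 < D by omega)]

lemma doubleStar_flat_zero_verts (D : ℕ) : ((doubleStar D).flat 0).verts = ∅ := by
  unfold GraphStream.flat doubleStar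
  simp [Finset.range_one]

lemma aux_valid_removeEdge {T : ℕ} {S : GraphStream} (hS : S.Valid T) (e : Sym2 ℕ) :
    (S.removeEdge e).Valid T := by
  obtain ⟨h1, h2, h3, h4⟩ := hS
  refine ⟨?_, h2, ?_, ?_⟩
  · intro t ht
    apply h1 t
    rcases ht with h | h
    · exact Or.inl h
    · exact Or.inr (h.mono (Finset.erase_subset _ _))
  · intro s t hst
    exact (h3 s t hst).mono (Finset.erase_subset _ _) (Finset.erase_subset _ _)
  · intro t f hf
    exact h4 t f (Finset.mem_of_mem_erase hf)

end Witness

/-- incremental edge-sensitivity of `k`-star counts.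
For `k ≥ 1` and every pair of edge-neighboring insertion-only graph streams of length
`T` whose flattened graphs have maximum degree at most `D`, the ℓ₁ distance between the
increment sequences of the `k`-star counts is at most `2·C(D-1, k-1)`; moreover the
bound is attained, even by a pair of such streams of length `T = 1`. -/
theorem kstar_incremental_edge_sensitivity (k D : ℕ) (hk : 1 ≤ k) (hD : 1 ≤ D) :
    (∀ (T : ℕ) (S S' : GraphStream), S.Valid T → S'.Valid T →
      edgeNeighborStream T S S' →
      (∀ v, (S.flat T).degree v ≤ D) → (∀ v, (S'.flat T).degree v ≤ D) →
      ∑ t ∈ Finset.Icc 1 T,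
          |(((S.flat t).kstarCount k : ℤ) - ((S.flat (t - 1)).kstarCount k : ℤ))
            - (((S'.flat t).kstarCount k : ℤ)
                - ((S'.flat (t - 1)).kstarCount k : ℤ))|
        ≤ 2 * ((D - 1).choose (k - 1) : ℤ)) ∧
    (∃ S S' : GraphStream, S.Valid 1 ∧ S'.Valid 1 ∧ edgeNeighborStream 1 S S' ∧
      (∀ v, (S.flat 1).degree v ≤ D) ∧ (∀ v, (S'.flat 1).degree v ≤ D) ∧
      ∑ t ∈ Finset.Icc 1 1,
          |(((S.flat t).kstarCount k : ℤ) - ((S.flat (t - 1)).kstarCount k : ℤ))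
            - (((S'.flat t).kstarCount k : ℤ)
                - ((S'.flat (t - 1)).kstarCount k : ℤ))|
        = 2 * ((D - 1).choose (k - 1) : ℤ)) := by
  constructor
  · intro T S S' hS hS' hnb hdS hdS'
    have hre : ∀ A B : GraphStream, A.Valid T → edgeRemovalStream T A B →
        (∀ v, (A.flat T).degree v ≤ D) →
        ∑ t ∈ Finset.Icc 1 T,
            |(((A.flat t).kstarCount k : ℤ) - ((A.flat (t - 1)).kstarCount k : ℤ))
              - (((B.flat t).kstarCount k : ℤ) - ((B.flat (t - 1)).kstarCount k : ℤ))|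
          ≤ 2 * ((D - 1).choose (k - 1) : ℤ) := by
      intro A B hA hAB hdA
      refine le_trans (le_of_eq (Finset.sum_congr rfl fun t _ => ?_))
        (forward_bound k D T hk A B hA hAB hdA)
      congr 1
      ring
    rcases hnb with h | h
    · exact hre S S' hS h hdS
    · refine le_trans (le_of_eq (Finset.sum_congr rfl fun t _ => ?_)) (hre S' S hS' h hdS')
      rw [abs_sub_comm]
  · refine ⟨doubleStar D, (doubleStar D).removeEdge s(0, 1), doubleStar_valid D hD,
      aux_valid_removeEdge (doubleStar_valid D hD) _,
      Or.inl (Or.inl ⟨1, s(0, 1), doubleStar_center_mem D hD, rfl⟩),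
      doubleStar_degree_le D hD, ?_, ?_⟩
    · intro v
      rw [aux_flat_removeEdge]
      exact le_trans (aux_degree_mono (Finset.erase_subset _ _) v)
        (doubleStar_degree_le D hD v)
    · have h01 : (0 : ℕ) ≠ 1 := by omega
      have hmem : s(0, 1) ∈ ((doubleStar D).flat 1).edges :=
        Finset.mem_biUnion.2 ⟨1, Finset.mem_range.2 (by omega), doubleStar_center_mem D hD⟩
      have h0v : 0 ∈ ((doubleStar D).flat 1).verts := by
        rw [doubleStar_flat_one]
        exact Finset.mem_range.2 (by omega)
      have h1v : 1 ∈ ((doubleStar D).flat 1).verts := by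
        rw [doubleStar_flat_one]
        exact Finset.mem_range.2 (by omega)
      have hkey := aux_kstar_removeEdge ((doubleStar D).flat 1) h01 hmem h0v h1v hk
      rw [doubleStar_degree_zero D hD, doubleStar_degree_one D hD] at hkey
      have hz : ((doubleStar D).flat 0).kstarCount k = 0 := by
        unfold FinGraph.kstarCount
        rw [doubleStar_flat_zero_verts]
        exact Finset.sum_empty
      have hz' : ((((doubleStar D).flat 0)).removeEdge s(0, 1)).kstarCount k = 0 := by
        unfold FinGraph.kstarCount FinGraph.removeEdge
        rw [doubleStar_flat_zero_verts]
        exact Finset.sum_empty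
      rw [Finset.Icc_self, Finset.sum_singleton]
      simp only [show (1 : ℕ) - 1 = 0 from rfl]
      rw [aux_flat_removeEdge, aux_flat_removeEdge, hz, hz', hkey]
      have hc : (0 : ℤ) ≤ ((D - 1).choose (k - 1) : ℤ) := Nat.cast_nonneg _
      push_cast
      rw [abs_of_nonneg (by linarith)]
      ring
end
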